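/- The maximum of the Λ-periodic Gaussian function f_{σ,Λ} over ℝⁿ is attained at the points of Λ; equivalently, f_{σ,Λ}(x) ≤ f_{σ,Λ}(0) for all x ∈ ℝⁿ. -/

import Mathlib

open Real

noncomputable section

/-- Squared Euclidean norm on `Fin n → ℝ`. -/
def sqnorm {n : ℕ} (v : Fin n → ℝ) : ℝ := ∑ i, v i ^ 2

/-- Lattice point `B z` for integer vector `z`. -/
def latp {n : ℕ} (B : Matrix (Fin n) (Fin n) ℝ) (z : Fin n → ℤ) : Fin n → ℝ :=
  B.mulVec (fun j => (z j : ℝ))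

/-- The Λ-periodic Gaussian `f_{σ,Λ}(x)`. -/
def periodicGauss {n : ℕ} (B : Matrix (Fin n) (Fin n) ℝ) (σ : ℝ) (x : Fin n → ℝ) : ℝ :=
  (2 * π * σ ^ 2) ^ (-(n : ℝ) / 2) *
    ∑' z : Fin n → ℤ, Real.exp (-(sqnorm (x - latp B z)) / (2 * σ ^ 2))

/-- The flatness factor `ε_Λ(σ) = max_x |V(Λ) f_{σ,Λ}(x) − 1|`. -/
def flatness {n : ℕ} (B : Matrix (Fin n) (Fin n) ℝ) (σ : ℝ) : ℝ :=
  ⨆ x : Fin n → ℝ, |(|B.det|) * periodicGauss B σ x - 1|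

namespace PG
variable {n : ℕ}


def dotp (a b : Fin n → ℝ) : ℝ := ∑ i, a i * b i

lemma sqnorm_nonneg (v : Fin n → ℝ) : 0 ≤ sqnorm v :=
  Finset.sum_nonneg fun i _ => sq_nonneg _

lemma sqnorm_neg (v : Fin n → ℝ) : sqnorm (-v) = sqnorm v := by
  simp [sqnorm]

lemma sqnorm_sub (a b : Fin n → ℝ) :
    sqnorm (a - b) = sqnorm a + sqnorm b - 2 * dotp a b := by
  simp only [sqnorm, dotp, Pi.sub_apply, Finset.mul_sum, ← Finset.sum_add_distrib,
    ← Finset.sum_sub_distrib]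
  exact Finset.sum_congr rfl fun i _ => by ring

lemma dotp_smul (a : ℝ) (u v : Fin n → ℝ) :
    dotp (a • u) (a • v) = a ^ 2 * dotp u v := by
  simp only [dotp, Pi.smul_apply, smul_eq_mul, Finset.mul_sum]
  exact Finset.sum_congr rfl fun i _ => by ring

lemma dotp_pow_sum_nonneg {ι : Type*} (s : Finset ι) (p : ι → Fin n → ℝ) (d : ι → ℝ)
    (k : ℕ) : 0 ≤ ∑ i ∈ s, ∑ j ∈ s, d i * d j * dotp (p i) (p j) ^ k := by
  have h : ∀ i j : ι, d i * d j * dotp (p i) (p j) ^ k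
      = ∑ f : Fin k → Fin n, (d i * ∏ l, p i (f l)) * (d j * ∏ l, p j (f l)) := by
    intro i j
    rw [dotp, Fintype.sum_pow, Finset.mul_sum]
    exact Finset.sum_congr rfl fun f _ => by rw [Finset.prod_mul_distrib]; ring
  simp_rw [h]
  have h2 : (∑ i ∈ s, ∑ j ∈ s, ∑ f : Fin k → Fin n,
        (d i * ∏ l, p i (f l)) * (d j * ∏ l, p j (f l)))
      = ∑ f : Fin k → Fin n, (∑ i ∈ s, d i * ∏ l, p i (f l)) ^ 2 := by
    rw [Finset.sum_congr rfl fun i _ => Finset.sum_comm (s := s)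
      (t := (Finset.univ : Finset (Fin k → Fin n))) (f := fun j f =>
        (d i * ∏ l, p i (f l)) * (d j * ∏ l, p j (f l))), Finset.sum_comm]
    exact Finset.sum_congr rfl fun f _ => by rw [sq, Finset.sum_mul_sum]
  rw [h2]
  exact Finset.sum_nonneg fun f _ => sq_nonneg _

lemma pd {ι : Type*} (τ : ℝ) (hτ : 0 < τ) (s : Finset ι) (p : ι → Fin n → ℝ) (c : ι → ℝ) :
    0 ≤ ∑ i ∈ s, ∑ j ∈ s, c i * c j * Real.exp (-(sqnorm (p i - p j)) / τ) := by
  set d : ι → ℝ := fun i => c i * Real.exp (-(sqnorm (p i)) / τ) with hd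
  set P : ι → Fin n → ℝ := fun i => Real.sqrt (2 / τ) • p i with hP
  have hterm : ∀ i j : ι, c i * c j * Real.exp (-(sqnorm (p i - p j)) / τ)
      = d i * d j * Real.exp (dotp (P i) (P j)) := by
    intro i j
    have h1 : dotp (P i) (P j) = (2 / τ) * dotp (p i) (p j) := by
      rw [hP, dotp_smul, Real.sq_sqrt (by positivity)]
    have h2 : -(sqnorm (p i - p j)) / τ
        = -(sqnorm (p i)) / τ + (-(sqnorm (p j)) / τ + (2 / τ) * dotp (p i) (p j)) := by
      rw [sqnorm_sub]; field_simp; ring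
    rw [h1, h2, Real.exp_add, Real.exp_add, hd]
    ring
  simp_rw [hterm]
  have hsummand : ∀ ij : ι × ι, Summable (fun k : ℕ =>
      d ij.1 * d ij.2 * (dotp (P ij.1) (P ij.2) ^ k / (k.factorial : ℝ))) :=
    fun ij => (Real.summable_pow_div_factorial _).mul_left _
  have hexp : ∀ i j : ι, d i * d j * Real.exp (dotp (P i) (P j))
      = ∑' k : ℕ, d i * d j * (dotp (P i) (P j) ^ k / (k.factorial : ℝ)) := by
    intro i j
    rw [Real.exp_eq_exp_ℝ, NormedSpace.exp_eq_tsum_div, ← tsum_mul_left]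
  simp_rw [hexp]
  rw [← Finset.sum_product']
  rw [← Summable.tsum_finsetSum (fun ij _ => hsummand ij)]
  refine tsum_nonneg fun k => ?_
  rw [Finset.sum_product]
  have : ∀ i j : ι, d i * d j * (dotp (P i) (P j) ^ k / (k.factorial : ℝ))
      = ((k.factorial : ℝ))⁻¹ * (d i * d j * dotp (P i) (P j) ^ k) := fun i j => by ring
  simp_rw [this, ← Finset.mul_sum]
  exact mul_nonneg (by positivity) (dotp_pow_sum_nonneg s P d k)

lemma pd_two {ι : Type*} (τ : ℝ) (hτ : 0 < τ) (s : Finset ι) (a b : ι → Fin n → ℝ) :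
    2 * ∑ i ∈ s, ∑ j ∈ s, Real.exp (-(sqnorm (a i - b j)) / τ)
      ≤ ∑ i ∈ s, ∑ j ∈ s, Real.exp (-(sqnorm (a i - a j)) / τ)
        + ∑ i ∈ s, ∑ j ∈ s, Real.exp (-(sqnorm (b i - b j)) / τ) := by
  have h := pd τ hτ (s.disjSum s) (Sum.elim a b)
    (Sum.elim (fun _ => (1 : ℝ)) (fun _ => (-1 : ℝ)))
  simp only [Finset.sum_disjSum, Sum.elim_inl, Sum.elim_inr, one_mul, mul_one,
    neg_one_mul, mul_neg_one, neg_neg, Finset.sum_add_distrib, Finset.sum_neg_distrib] at h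
  have e1 : ∑ i ∈ s, ∑ j ∈ s, Real.exp (-(sqnorm (b i - a j)) / τ)
      = ∑ i ∈ s, ∑ j ∈ s, Real.exp (-(sqnorm (a i - b j)) / τ) := by
    rw [Finset.sum_comm]
    exact Finset.sum_congr rfl fun i _ => Finset.sum_congr rfl fun j _ => by
      rw [← neg_sub (a i) (b j), sqnorm_neg]
  linarith [h, e1]

lemma latp_sub (B : Matrix (Fin n) (Fin n) ℝ) (z w : Fin n → ℤ) :
    latp B z - latp B w = latp B (z - w) := by
  have hc : (fun j => (((z - w) j : ℤ) : ℝ)) = (fun j => (z j : ℝ)) - (fun j => (w j : ℝ)) := by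
    funext j; simp [Pi.sub_apply]
  unfold latp
  rw [hc, Matrix.mulVec_sub]

lemma step2 (B : Matrix (Fin n) (Fin n) ℝ) (τ : ℝ) (hτ : 0 < τ) (x : Fin n → ℝ)
    (F : Finset (Fin n → ℤ)) :
    ∑ i ∈ F, ∑ j ∈ F, Real.exp (-(sqnorm (x - latp B (i - j))) / τ)
      ≤ ∑ i ∈ F, ∑ j ∈ F, Real.exp (-(sqnorm (latp B (i - j))) / τ) := by
  have h := pd_two τ hτ F (fun i => latp B i) (fun i => latp B i + x)
  have e1 : ∀ i j : Fin n → ℤ, latp B i - (latp B j + x) = -(x - latp B (i - j)) := by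
    intro i j; rw [← latp_sub]; abel
  have e2 : ∀ i j : Fin n → ℤ, latp B i + x - (latp B j + x) = latp B (i - j) := by
    intro i j; rw [← latp_sub]; abel
  have e3 : ∀ i j : Fin n → ℤ, latp B i - latp B j = latp B (i - j) := latp_sub B
  simp only [e1, e2, e3, sqnorm_neg] at h
  linarith
lemma summable_int_gauss (c : ℝ) (hc : 0 < c) (y : ℝ) :
    Summable fun m : ℤ => Real.exp (-c * ((m : ℝ) - y) ^ 2) := by
  have hr0 : 0 ≤ Real.exp (-(c / 2)) := (Real.exp_pos _).le
  have hr1 : Real.exp (-(c / 2)) < 1 := by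
    rw [Real.exp_lt_one_iff]; linarith
  have hb : Summable fun m : ℤ =>
      Real.exp (c * y ^ 2) * Real.exp (-(c / 2)) ^ m.natAbs := by
    apply Summable.mul_left
    apply Summable.of_nat_of_neg
    · simpa using summable_geometric_of_lt_one hr0 hr1
    · simpa using summable_geometric_of_lt_one hr0 hr1
  refine Summable.of_nonneg_of_le (fun m => (Real.exp_pos _).le) (fun m => ?_) hb
  rw [← Real.exp_nat_mul, ← Real.exp_add]
  apply Real.exp_le_exp.mpr
  have key : ((m : ℝ)) ^ 2 ≤ 2 * ((m : ℝ) - y) ^ 2 + 2 * y ^ 2 := by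
    nlinarith [sq_nonneg ((m : ℝ) - 2 * y)]
  have ha : ((m.natAbs : ℕ) : ℝ) = |(m : ℝ)| := by rw [Nat.cast_natAbs, Int.cast_abs]
  have key2 : ((m.natAbs : ℕ) : ℝ) ≤ ((m : ℝ)) ^ 2 := by
    calc ((m.natAbs : ℕ) : ℝ) ≤ ((m.natAbs : ℕ) : ℝ) ^ 2 := by
          exact_mod_cast Nat.le_self_pow two_ne_zero m.natAbs
      _ = ((m : ℝ)) ^ 2 := by rw [ha, sq_abs]
  nlinarith

lemma summable_pi_gauss (m : ℕ) (c : ℝ) (hc : 0 < c) (y : Fin m → ℝ) :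
    Summable fun z : Fin m → ℤ => ∏ i, Real.exp (-c * ((z i : ℝ) - y i) ^ 2) := by
  induction m with
  | zero => exact Summable.of_finite
  | succ m ih =>
    have h2 := ih (fun i => y i.succ)
    have h1 := summable_int_gauss c hc (y 0)
    have hprod := Summable.mul_of_nonneg h1 h2 (fun a => (Real.exp_pos _).le)
      (fun b => Finset.prod_nonneg fun _ _ => (Real.exp_pos _).le)
    apply (Equiv.summable_iff (Fin.consEquiv (fun _ : Fin (m+1) => ℤ))).mp
    apply Summable.congr hprod
    intro p
    show _ = ∏ i, Real.exp (-c * (((Fin.cons p.1 p.2 : Fin (m+1) → ℤ) i : ℝ) - y i) ^ 2)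
    rw [Fin.prod_univ_succ]
    simp [Fin.cons_zero, Fin.cons_succ]

lemma summable_g (B : Matrix (Fin n) (Fin n) ℝ) (hB : B.det ≠ 0) (τ : ℝ) (hτ : 0 < τ)
    (x : Fin n → ℝ) :
    Summable fun z : Fin n → ℤ => Real.exp (-(sqnorm (x - latp B z)) / τ) := by
  set A := B⁻¹ with hA
  have hAB : ∀ v : Fin n → ℝ, A.mulVec (B.mulVec v) = v := by
    intro v
    rw [Matrix.mulVec_mulVec, Matrix.nonsing_inv_mul B (isUnit_iff_ne_zero.mpr hB),
      Matrix.one_mulVec]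
  set K : ℝ := (∑ i, ∑ j, A i j ^ 2) + 1 with hKdef
  have hK : 0 < K := by positivity
  have hKb : ∀ v : Fin n → ℝ, sqnorm (A.mulVec v) ≤ K * sqnorm v := by
    intro v
    have hrow : ∀ i : Fin n, (A.mulVec v i) ^ 2 ≤ (∑ j, A i j ^ 2) * sqnorm v := by
      intro i
      have h := Finset.sum_mul_sq_le_sq_mul_sq Finset.univ (fun j => A i j) v
      simpa [Matrix.mulVec, dotProduct, sqnorm] using h
    calc sqnorm (A.mulVec v) = ∑ i, (A.mulVec v i) ^ 2 := rfl
      _ ≤ ∑ i, (∑ j, A i j ^ 2) * sqnorm v := Finset.sum_le_sum fun i _ => hrow i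
      _ = (∑ i, ∑ j, A i j ^ 2) * sqnorm v := by rw [Finset.sum_mul]
      _ ≤ K * sqnorm v := by
          apply mul_le_mul_of_nonneg_right _ (sqnorm_nonneg v)
          rw [hKdef]; linarith
  set y := A.mulVec x with hy
  have hle : ∀ z : Fin n → ℤ, Real.exp (-(sqnorm (x - latp B z)) / τ)
      ≤ ∏ i, Real.exp (-(1 / (K * τ)) * ((z i : ℝ) - y i) ^ 2) := by
    intro z
    rw [← Real.exp_sum]
    apply Real.exp_le_exp.mpr
    have hzy : (fun i => ((z i : ℤ) : ℝ)) - y = A.mulVec (latp B z - x) := by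
      rw [Matrix.mulVec_sub, hy, latp, hAB]
    have h1 : sqnorm ((fun i => ((z i : ℤ) : ℝ)) - y) ≤ K * sqnorm (x - latp B z) := by
      rw [hzy]
      calc sqnorm (A.mulVec (latp B z - x)) ≤ K * sqnorm (latp B z - x) := hKb _
        _ = K * sqnorm (x - latp B z) := by rw [← neg_sub x (latp B z), sqnorm_neg]
    have h2 : (∑ i, -(1 / (K * τ)) * (((z i : ℤ) : ℝ) - y i) ^ 2)
        = -(sqnorm ((fun i => ((z i : ℤ) : ℝ)) - y)) / (K * τ) := by
      rw [sqnorm, neg_div, Finset.sum_div, ← Finset.sum_neg_distrib]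
      refine Finset.sum_congr rfl fun i _ => ?_
      simp only [Pi.sub_apply]
      ring
    rw [h2]
    rw [div_le_div_iff₀ hτ (by positivity)]
    nlinarith [sqnorm_nonneg (x - latp B z)]
  apply Summable.of_nonneg_of_le (fun z => (Real.exp_pos _).le) hle
  exact summable_pi_gauss n (1 / (K * τ)) (by positivity) y
lemma tsum_le_tsum_zero (B : Matrix (Fin n) (Fin n) ℝ) (hB : B.det ≠ 0) (τ : ℝ)
    (hτ : 0 < τ) (x : Fin n → ℝ) :
    (∑' z : Fin n → ℤ, Real.exp (-(sqnorm (x - latp B z)) / τ))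
      ≤ ∑' z : Fin n → ℤ, Real.exp (-(sqnorm ((0 : Fin n → ℝ) - latp B z)) / τ) := by
  have hzero : ∀ z : Fin n → ℤ,
      Real.exp (-(sqnorm ((0 : Fin n → ℝ) - latp B z)) / τ)
        = Real.exp (-(sqnorm (latp B z)) / τ) := by
    intro z; rw [zero_sub, sqnorm_neg]
  set S0 : ℝ := ∑' z : Fin n → ℤ, Real.exp (-(sqnorm (latp B z)) / τ) with hS0
  have hsum0 : Summable fun z : Fin n → ℤ => Real.exp (-(sqnorm (latp B z)) / τ) := by
    apply Summable.congr (summable_g B hB τ hτ 0)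
    intro z; exact hzero z
  have bound0 : ∀ (s : Finset (Fin n → ℤ)) (w : Fin n → ℤ),
      ∑ z ∈ s, Real.exp (-(sqnorm (latp B (z - w))) / τ) ≤ S0 := by
    intro s w
    have hsw : Summable fun z : Fin n → ℤ => Real.exp (-(sqnorm (latp B (z - w))) / τ) :=
      (Equiv.subRight w).summable_iff.mpr hsum0
    refine le_trans (Summable.sum_le_tsum s (fun z _ => (Real.exp_pos _).le) hsw) ?_
    rw [hS0]
    exact le_of_eq ((Equiv.subRight w).tsum_eq
      (fun u => Real.exp (-(sqnorm (latp B u)) / τ)))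
  -- key finite-set bound
  have key : ∀ G : Finset (Fin n → ℤ),
      ∑ v ∈ G, Real.exp (-(sqnorm (x - latp B v)) / τ) ≤ S0 := by
    intro G
    set T : ℝ := ∑ v ∈ G, Real.exp (-(sqnorm (x - latp B v)) / τ) with hT
    have hT0 : 0 ≤ T := Finset.sum_nonneg fun _ _ => (Real.exp_pos _).le
    set M : ℕ := G.sup fun v => Finset.univ.sup fun i => (v i).natAbs with hMdef
    have hM : ∀ v ∈ G, ∀ i, (v i).natAbs ≤ M := by
      intro v hv i
      refine le_trans (Finset.le_sup (f := fun i => (v i).natAbs) (Finset.mem_univ i)) ?_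
      exact Finset.le_sup (f := fun v => Finset.univ.sup fun i => (v i).natAbs) hv
    clear_value M
    clear hMdef
    have main : ∀ N : ℕ, 2 * M < N →
        ((N - 2 * M : ℕ) : ℝ) ^ n * T ≤ (N : ℝ) ^ n * S0 := by
      intro N hN
      set F : Finset (Fin n → ℤ) :=
        Fintype.piFinset fun _ : Fin n => Finset.Ico (0 : ℤ) (N : ℤ) with hF
      set H : Finset (Fin n → ℤ) :=
        Fintype.piFinset fun _ : Fin n => Finset.Ico (M : ℤ) ((N : ℤ) - M) with hH
      have hHcard : (H.card : ℝ) = ((N - 2 * M : ℕ) : ℝ) ^ n := by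
        have ht : ((N : ℤ) - M - M).toNat = N - 2 * M := by omega
        rw [hH, Fintype.card_piFinset]
        simp [Int.card_Ico, ht]
      have hFcard : (F.card : ℝ) = (N : ℝ) ^ n := by
        have ht : ((N : ℤ) - 0).toNat = N := by omega
        rw [hF, Fintype.card_piFinset]
        simp [Int.card_Ico]
      -- step 1
      have hsub : (Finset.image (fun vw : (Fin n → ℤ) × (Fin n → ℤ) => (vw.1 + vw.2, vw.2))
          (G ×ˢ H)) ⊆ F ×ˢ F := by
        intro p hp
        obtain ⟨vw, hvw, rfl⟩ := Finset.mem_image.mp hp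
        obtain ⟨hv, hw⟩ := Finset.mem_product.mp hvw
        rw [Finset.mem_product]
        constructor
        · rw [hF, Fintype.mem_piFinset]
          intro i
          rw [Finset.mem_Ico]
          have h1 := hM vw.1 hv i
          have h2 : vw.2 i ∈ Finset.Ico (M : ℤ) ((N : ℤ) - M) := by
            rw [hH, Fintype.mem_piFinset] at hw; exact hw i
          rw [Finset.mem_Ico] at h2
          simp only [Pi.add_apply]
          omega
        · rw [hF, Fintype.mem_piFinset]
          intro i
          rw [Finset.mem_Ico]
          have h2 : vw.2 i ∈ Finset.Ico (M : ℤ) ((N : ℤ) - M) := by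
            rw [hH, Fintype.mem_piFinset] at hw; exact hw i
          rw [Finset.mem_Ico] at h2
          have h1 := hM vw.1 hv i
          dsimp only
          omega
      have hinj : ∀ a ∈ G ×ˢ H, ∀ b ∈ G ×ˢ H,
          (fun vw : (Fin n → ℤ) × (Fin n → ℤ) => (vw.1 + vw.2, vw.2)) a
            = (fun vw : (Fin n → ℤ) × (Fin n → ℤ) => (vw.1 + vw.2, vw.2)) b → a = b := by
        intro a _ b _ h
        simp only [Prod.mk.injEq] at h
        obtain ⟨h1, h2⟩ := h
        have : a.1 = b.1 := by
          have := h1; rw [h2] at this; exact add_right_cancel this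
        exact Prod.ext this h2
      have h1 : (H.card : ℝ) * T
          ≤ ∑ i ∈ F, ∑ j ∈ F, Real.exp (-(sqnorm (x - latp B (i - j))) / τ) := by
        have e1 : (H.card : ℝ) * T = ∑ vw ∈ G ×ˢ H,
            Real.exp (-(sqnorm (x - latp B vw.1)) / τ) := by
          rw [Finset.sum_product, hT, Finset.mul_sum]
          refine Finset.sum_congr rfl fun v _ => ?_
          simp [Finset.sum_const, nsmul_eq_mul, mul_comm]
        have e2 : ∑ vw ∈ G ×ˢ H, Real.exp (-(sqnorm (x - latp B vw.1)) / τ)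
            = ∑ p ∈ (Finset.image (fun vw : (Fin n → ℤ) × (Fin n → ℤ) =>
                (vw.1 + vw.2, vw.2)) (G ×ˢ H)),
              Real.exp (-(sqnorm (x - latp B (p.1 - p.2))) / τ) := by
          rw [Finset.sum_image hinj]
          exact Finset.sum_congr rfl fun vw _ => by
            simp [add_sub_cancel_right]
        rw [e1, e2, ← Finset.sum_product' (f := fun i j =>
          Real.exp (-(sqnorm (x - latp B (i - j))) / τ))]
        exact Finset.sum_le_sum_of_subset_of_nonneg hsub
          (fun _ _ _ => (Real.exp_pos _).le)
      -- step 3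
      have h3 : ∑ i ∈ F, ∑ j ∈ F, Real.exp (-(sqnorm (latp B (i - j))) / τ)
          ≤ (F.card : ℝ) * S0 := by
        rw [Finset.sum_comm]
        calc ∑ j ∈ F, ∑ i ∈ F, Real.exp (-(sqnorm (latp B (i - j))) / τ)
            ≤ ∑ _j ∈ F, S0 := Finset.sum_le_sum fun j _ => bound0 F j
          _ = (F.card : ℝ) * S0 := by rw [Finset.sum_const, nsmul_eq_mul]
      calc ((N - 2 * M : ℕ) : ℝ) ^ n * T = (H.card : ℝ) * T := by rw [hHcard]
        _ ≤ ∑ i ∈ F, ∑ j ∈ F, Real.exp (-(sqnorm (x - latp B (i - j))) / τ) := h1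
        _ ≤ ∑ i ∈ F, ∑ j ∈ F, Real.exp (-(sqnorm (latp B (i - j))) / τ) :=
            step2 B τ hτ x F
        _ ≤ (F.card : ℝ) * S0 := h3
        _ = (N : ℝ) ^ n * S0 := by rw [hFcard]
    -- limit argument
    have htend : Filter.Tendsto
        (fun N : ℕ => (((N - 2 * M : ℕ) : ℝ) / (N : ℝ)) ^ n * T)
        Filter.atTop (nhds T) := by
      have hdiv : Filter.Tendsto (fun N : ℕ => ((N - 2 * M : ℕ) : ℝ) / (N : ℝ))
          Filter.atTop (nhds 1) := by
        have hbase : Filter.Tendsto (fun N : ℕ => 1 - (2 * M : ℝ) / (N : ℝ))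
            Filter.atTop (nhds 1) := by
          have := tendsto_const_div_atTop_nhds_zero_nat (2 * M : ℝ)
          have h2 := (tendsto_const_nhds (x := (1:ℝ)) (f := Filter.atTop (α := ℕ))).sub this
          simpa using h2
        apply Filter.Tendsto.congr' _ hbase
        filter_upwards [Filter.eventually_ge_atTop (2 * M + 1)] with N hN
        have hN0 : (0 : ℝ) < (N : ℝ) := by
          exact_mod_cast Nat.lt_of_lt_of_le (Nat.succ_pos _) hN
        rw [Nat.cast_sub (by omega)]
        push_cast
        field_simp
      have := (hdiv.pow n).mul_const T
      simpa using this
    refine le_of_tendsto htend ?_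
    filter_upwards [Filter.eventually_ge_atTop (2 * M + 1)] with N hN
    have hNpos : (0 : ℝ) < (N : ℝ) ^ n := by
      have : (0:ℝ) < (N:ℝ) := by exact_mod_cast Nat.lt_of_lt_of_le (Nat.succ_pos _) hN
      positivity
    have hmain := main N (by omega)
    rw [div_pow, div_mul_eq_mul_div, div_le_iff₀ hNpos]
    calc ((N - 2 * M : ℕ) : ℝ) ^ n * T ≤ (N : ℝ) ^ n * S0 := hmain
      _ = S0 * (N : ℝ) ^ n := by ring
  -- conclude
  have := Summable.tsum_le_of_sum_le (summable_g B hB τ hτ x) key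
  refine le_trans this (le_of_eq ?_)
  rw [hS0]
  exact tsum_congr fun z => (hzero z).symm

end PG

theorem periodicGauss_le_at_zero (n : ℕ) (hn : 0 < n) (B : Matrix (Fin n) (Fin n) ℝ)
    (hB : B.det ≠ 0) (σ : ℝ) (hσ : 0 < σ) (x : Fin n → ℝ) :
    periodicGauss B σ x ≤ periodicGauss B σ 0 := by
  unfold periodicGauss
  apply mul_le_mul_of_nonneg_left _ (Real.rpow_nonneg (by positivity) _)
  exact PG.tsum_le_tsum_zero B hB (2 * σ ^ 2) (by positivity) x

end
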